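/- Let H be a complex Hilbert space, S and R subspaces (not necessarily closed) of H with the closure of R contained in the closure of S, and let V be a closed subspace of H with V^⊥ ⊆ S. Let P denote the orthogonal projection of H onto the closed subspace V ∩ cl(S), where cl(S) is the topological closure of S. Then S + R is a closed subspace of H if and only if (V ∩ S) + P(R) is a closed subspace of H. -/

import Mathlib

/-- The orthogonal projection of a Hilbert space onto a closed subspace,
as a continuous linear operator on the whole space. -/
noncomputable def projCLM {H : Type*} [NormedAddCommGroup H] [InnerProductSpace ℂ H]
    [CompleteSpace H] (W : Submodule ℂ H) (hW : IsClosed (W : Set H)) : H →L[ℂ] H :=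
  haveI : CompleteSpace W := hW.completeSpace_coe
  W.subtypeL.comp (Submodule.orthogonalProjectionOnto W)

section aux
variable {H : Type*} [NormedAddCommGroup H] [InnerProductSpace ℂ H] [CompleteSpace H]
  (W : Submodule ℂ H) (hW : IsClosed (W : Set H))

lemma projCLM_mem (x : H) : projCLM W hW x ∈ W := by
  haveI : CompleteSpace W := hW.completeSpace_coe
  exact (W.orthogonalProjectionOnto x).2

lemma projCLM_eq_self {x : H} (hx : x ∈ W) : projCLM W hW x = x := by
  haveI : CompleteSpace W := hW.completeSpace_coe
  exact (Submodule.starProjection_eq_self_iff (K := W)).mpr hx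

lemma projCLM_eq_zero {x : H} (hx : x ∈ Wᗮ) : projCLM W hW x = 0 := by
  haveI : CompleteSpace W := hW.completeSpace_coe
  simp [projCLM, Submodule.orthogonalProjectionOnto_apply_of_mem_orthogonal hx]

lemma sub_projCLM_mem (x : H) : x - projCLM W hW x ∈ Wᗮ := by
  haveI : CompleteSpace W := hW.completeSpace_coe
  exact W.sub_starProjection_mem_orthogonal x
end aux

theorem stmt_6_aux {H : Type*} [NormedAddCommGroup H] [InnerProductSpace ℂ H] [CompleteSpace H]
    (S R : Submodule ℂ H) (hRS : R.topologicalClosure ≤ S.topologicalClosure)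
    (V : Submodule ℂ H) (hV : IsClosed (V : Set H)) (hVS : Vᗮ ≤ S)
    (hW : IsClosed ((V ⊓ S.topologicalClosure : Submodule ℂ H) : Set H)) :
    IsClosed ((S ⊔ R : Submodule ℂ H) : Set H) ↔
      IsClosed ((((V ⊓ S) ⊔ Submodule.map ((projCLM (V ⊓ S.topologicalClosure) hW) : H →ₗ[ℂ] H) R :
        Submodule ℂ H)) : Set H) := by
  set W : Submodule ℂ H := V ⊓ S.topologicalClosure with hWdef
  set P : H →L[ℂ] H := projCLM W hW with hPdef
  haveI : CompleteSpace V := hV.completeSpace_coe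
  -- key: for x in cl S, x - P x ∈ Vᗮ
  have key : ∀ x ∈ S.topologicalClosure, x - P x ∈ Vᗮ := by
    intro x hx
    have hVc : IsClosed ((Vᗮ : Submodule ℂ H) : Set H) := Submodule.isClosed_orthogonal V
    set a : H := projCLM Vᗮ hVc x with ha
    have haV : a ∈ Vᗮ := projCLM_mem _ _ x
    have hbV : x - a ∈ V := by
      have := sub_projCLM_mem Vᗮ hVc x
      rwa [Submodule.orthogonal_orthogonal] at this
    have hbW : x - a ∈ W := ⟨hbV, Submodule.sub_mem _ hx (S.le_topologicalClosure (hVS haV))⟩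
    have hPa : P a = 0 := projCLM_eq_zero _ _ (Submodule.orthogonal_le inf_le_left haV)
    have hPx : P x = x - a := by
      have : P x = P a + P (x - a) := by rw [← map_add]; congr 1; abel
      rw [this, hPa, projCLM_eq_self _ _ hbW, zero_add]
    rw [hPx]
    simpa using haV
  have keyS : ∀ x ∈ S, x - P x ∈ Vᗮ := fun x hx => key x (S.le_topologicalClosure hx)
  have keyR : ∀ x ∈ R, x - P x ∈ Vᗮ := fun x hx =>
    key x (hRS (R.le_topologicalClosure hx))
  set T : Submodule ℂ H := (V ⊓ S) ⊔ Submodule.map (P : H →ₗ[ℂ] H) R with hTdef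
  have hTV : T ≤ V := sup_le inf_le_left (by
    rintro _ ⟨r, _, rfl⟩
    exact (Submodule.mem_inf.mp (projCLM_mem _ _ r)).1)
  -- submodule equality
  have hsum : S ⊔ R = Vᗮ ⊔ T := by
    apply le_antisymm
    · apply sup_le
      · intro s hs
        have h1 : s - P s ∈ Vᗮ := keyS s hs
        have h2 : P s ∈ V ⊓ S := ⟨(Submodule.mem_inf.mp (projCLM_mem _ _ s)).1,
          by have := Submodule.sub_mem S hs (hVS h1); simpa using this⟩
        have : s = (s - P s) + P s := by abel
        rw [this]
        exact Submodule.add_mem _ (Submodule.mem_sup_left h1)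
          (Submodule.mem_sup_right (Submodule.mem_sup_left h2))
      · intro r hr
        have h1 : r - P r ∈ Vᗮ := keyR r hr
        have : r = (r - P r) + P r := by abel
        rw [this]
        exact Submodule.add_mem _ (Submodule.mem_sup_left h1)
          (Submodule.mem_sup_right (Submodule.mem_sup_right ⟨r, hr, rfl⟩))
    · apply sup_le
      · exact le_trans hVS le_sup_left
      · apply sup_le
        · exact le_trans inf_le_right le_sup_left
        · rintro _ ⟨r, hr, rfl⟩
          have h1 : r - P r ∈ Vᗮ := keyR r hr
          have : P r = r - (r - P r) := by abel
          rw [ContinuousLinearMap.coe_coe, this]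
          exact Submodule.sub_mem _ (Submodule.mem_sup_right hr)
            (Submodule.mem_sup_left (hVS h1))
  rw [hsum]
  -- the sets
  constructor
  · intro hcl
    have hTeq : T = (Vᗮ ⊔ T) ⊓ V := by
      apply le_antisymm (le_inf le_sup_right hTV)
      rintro x ⟨hx1, hx2⟩
      rcases Submodule.mem_sup.mp hx1 with ⟨u, hu, t, ht, rfl⟩
      have huV : u ∈ V := by
        have : u = (u + t) - t := by abel
        rw [this]; exact Submodule.sub_mem _ hx2 (hTV ht)
      have : u = 0 := by
        have h0 := hu u huV
        rwa [inner_self_eq_zero] at h0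
      rw [this, zero_add]; exact ht
    have hset : (T : Set H) = ((Vᗮ ⊔ T : Submodule ℂ H) : Set H) ∩ V := by
      conv_lhs => rw [hTeq, Submodule.coe_inf]
    rw [hset]
    exact hcl.inter hV
  · intro hcl
    have hset : ((Vᗮ ⊔ T : Submodule ℂ H) : Set H) = (projCLM V hV) ⁻¹' (T : Set H) := by
      ext x
      simp only [Set.mem_preimage, SetLike.mem_coe]
      constructor
      · intro hx
        rcases Submodule.mem_sup.mp hx with ⟨u, hu, t, ht, rfl⟩
        rw [map_add, projCLM_eq_zero _ _ hu, projCLM_eq_self _ _ (hTV ht), zero_add]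
        exact ht
      · intro hx
        have : x = (x - projCLM V hV x) + projCLM V hV x := by abel
        rw [this]
        exact Submodule.add_mem _ (Submodule.mem_sup_left (sub_projCLM_mem V hV x))
          (Submodule.mem_sup_right hx)
    rw [hset]
    exact hcl.preimage (projCLM V hV).continuous

theorem stmt_6 {H : Type*} [NormedAddCommGroup H] [InnerProductSpace ℂ H] [CompleteSpace H]
    (S R : Submodule ℂ H) (hRS : R.topologicalClosure ≤ S.topologicalClosure)
    (V : Submodule ℂ H) (hV : IsClosed (V : Set H)) (hVS : Vᗮ ≤ S) :
    IsClosed ((S ⊔ R : Submodule ℂ H) : Set H) ↔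
      IsClosed ((((V ⊓ S) ⊔ Submodule.map
          ((projCLM (V ⊓ S.topologicalClosure)
            (by rw [Submodule.coe_inf]; exact hV.inter S.isClosed_topologicalClosure)) : H →ₗ[ℂ] H) R :
        Submodule ℂ H)) : Set H) := by
  exact stmt_6_aux S R hRS V hV hVS _
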